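/- Let α > K ≥ 0, let b : ℝ → ℝ be K-Lipschitz, and let Ψ : C_{(0)} → C_{(0)} map f to the solution y of y(t) = −α∫₀^t y(s)ds + ∫₀^t b(y(s))ds + f(t). Then ‖Ψ(f) − Ψ(g)‖_{(0)} ≤ (2α/(α−K))‖f−g‖_{(0)} for all f, g ∈ C_{(0)}. -/
import Mathlib


open MeasureTheory Filter

/-- `f` belongs to the space `C_{(0)}` of continuous functions on `[0,∞)` with `f(0) = 0`
and `lim_{t→∞} |f(t)|/t = 0`. -/
def IsC0 (f : ℝ → ℝ) : Prop :=
  ContinuousOn f (Set.Ici 0) ∧ f 0 = 0 ∧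
    Tendsto (fun t => |f t| / t) atTop (nhds 0)

/-- The norm `‖f‖_{(0)} = sup_{t>0} |f(t)|/(1+t)` on `C_{(0)}`. -/
noncomputable def C0norm (f : ℝ → ℝ) : ℝ :=
  ⨆ t : Set.Ioi (0:ℝ), |f t| / (1 + (t : ℝ))

lemma C0_bddAbove (w : ℝ → ℝ) (hc : ContinuousOn w (Set.Ici 0))
    (hlim : Tendsto (fun t => |w t| / t) atTop (nhds 0)) :
    BddAbove (Set.range fun t : Set.Ioi (0:ℝ) => |w t| / (1 + (t:ℝ))) := by
  obtain ⟨T, hT⟩ := (Filter.eventually_atTop).mp (hlim.eventually_le_const zero_lt_one)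
  set T' : ℝ := max T 1 with hT'
  obtain ⟨C, hC⟩ := (isCompact_Icc : IsCompact (Set.Icc (0:ℝ) T')).exists_bound_of_continuousOn
    (hc.mono (fun x hx => hx.1))
  refine ⟨max C 1, ?_⟩
  rintro v ⟨⟨t, ht⟩, rfl⟩
  simp only
  have ht0 : (0:ℝ) < t := ht
  rcases le_or_gt t T' with h | h
  · have h1 : |w t| / (1 + t) ≤ |w t| := div_le_self (abs_nonneg _) (by linarith)
    have h2 : |w t| ≤ C := by simpa using hC t ⟨ht0.le, h⟩
    exact le_trans (h1.trans h2) (le_max_left _ _)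
  · have hTt : T ≤ t := le_trans (le_max_left T 1) h.le
    have h1 : |w t| / (1 + t) ≤ |w t| / t := by gcongr <;> linarith
    exact le_trans (h1.trans (hT t hTt)) (le_max_right _ _)

lemma C0norm_nonneg_of (w : ℝ → ℝ)
    (hbdd : BddAbove (Set.range fun t : Set.Ioi (0:ℝ) => |w t| / (1 + (t:ℝ)))) :
    0 ≤ C0norm w := by
  have := le_ciSup hbdd ⟨1, by norm_num⟩
  refine le_trans ?_ this
  positivity

lemma abs_le_C0norm (w : ℝ → ℝ) (hw0 : w 0 = 0)
    (hbdd : BddAbove (Set.range fun t : Set.Ioi (0:ℝ) => |w t| / (1 + (t:ℝ))))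
    (t : ℝ) (ht : 0 ≤ t) : |w t| ≤ C0norm w * (1 + t) := by
  rcases eq_or_lt_of_le ht with h | h
  · rw [← h, hw0]
    simp only [abs_zero]
    have h1 := C0norm_nonneg_of w hbdd
    nlinarith
  · have h1 : |w t| / (1 + t) ≤ C0norm w := le_ciSup hbdd ⟨t, h⟩
    rw [div_le_iff₀ (by linarith : (0:ℝ) < 1 + t)] at h1
    exact h1


lemma exp_weighted_integral_bound (a c t : ℝ) (ht : 0 ≤ t) (φ : ℝ → ℝ) (hφ : Continuous φ)
    (hbound : ∀ s ∈ Set.Icc (0:ℝ) t, |φ s| ≤ c) :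
    |∫ s in (0:ℝ)..t, Real.exp (a*s) * φ s| ≤ c * ∫ s in (0:ℝ)..t, Real.exp (a*s) := by
  have hec : Continuous (fun s : ℝ => Real.exp (a * s)) :=
    Real.continuous_exp.comp (continuous_const.mul continuous_id)
  have hint1 : IntervalIntegrable (fun s => |Real.exp (a*s) * φ s|) MeasureTheory.volume 0 t :=
    ((hec.mul hφ).abs).intervalIntegrable 0 t
  have hint2 : IntervalIntegrable (fun s => Real.exp (a*s) * c) MeasureTheory.volume 0 t :=
    (hec.mul continuous_const).intervalIntegrable 0 t
  calc |∫ s in (0:ℝ)..t, Real.exp (a*s) * φ s|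
      ≤ ∫ s in (0:ℝ)..t, |Real.exp (a*s) * φ s| :=
        intervalIntegral.abs_integral_le_integral_abs ht
    _ ≤ ∫ s in (0:ℝ)..t, Real.exp (a*s) * c := by
        apply intervalIntegral.integral_mono_on ht hint1 hint2
        intro s hs
        rw [abs_mul, abs_of_pos (Real.exp_pos _)]
        exact mul_le_mul_of_nonneg_left (hbound s hs) (Real.exp_pos _).le
    _ = c * ∫ s in (0:ℝ)..t, Real.exp (a*s) := by
        rw [intervalIntegral.integral_mul_const, mul_comm]

/-- Let `α > K ≥ 0`, let `b` be `K`-Lipschitz, and let `y, z ∈ C_{(0)}` be the solutions of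
`y(t) = -α∫₀ᵗ y(s) ds + ∫₀ᵗ b(y(s)) ds + f(t)` corresponding to `f, g ∈ C_{(0)}`.  Then
`‖y - z‖_{(0)} ≤ (2α/(α-K)) ‖f - g‖_{(0)}`. -/
theorem solution_map_C0_lipschitz
    (α K : ℝ) (hK : 0 ≤ K) (hαK : K < α)
    (b : ℝ → ℝ) (hb : ∀ x y : ℝ, |b x - b y| ≤ K * |x - y|)
    (f g y z : ℝ → ℝ)
    (hf : IsC0 f) (hg : IsC0 g) (hy : IsC0 y) (hz : IsC0 z)
    (hyeq : ∀ t : ℝ, 0 ≤ t →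
      y t = -α * (∫ s in (0:ℝ)..t, y s) + (∫ s in (0:ℝ)..t, b (y s)) + f t)
    (hzeq : ∀ t : ℝ, 0 ≤ t →
      z t = -α * (∫ s in (0:ℝ)..t, z s) + (∫ s in (0:ℝ)..t, b (z s)) + g t) :
    C0norm (fun t => y t - z t) ≤ (2 * α / (α - K)) * C0norm (fun t => f t - g t) := by
  have hα : 0 < α := lt_of_le_of_lt hK hαK
  have hbcont : Continuous b := by
    have hl : LipschitzWith (Real.toNNReal K) b := by
      rw [lipschitzWith_iff_dist_le_mul]
      intro x y
      simpa [Real.dist_eq, Real.coe_toNNReal K hK] using hb x y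
    exact hl.continuous
  -- extended (hatted) functions, continuous on all of ℝ
  set Yh : ℝ → ℝ := fun t => y (max t 0) with hYdef
  set Zh : ℝ → ℝ := fun t => z (max t 0) with hZdef
  set Fh : ℝ → ℝ := fun t => f (max t 0) with hFdef
  set Gh : ℝ → ℝ := fun t => g (max t 0) with hGdef
  have hmax : Continuous (fun t : ℝ => max t 0) := continuous_id.max continuous_const
  have hmem : ∀ x : ℝ, max x 0 ∈ Set.Ici (0:ℝ) := fun x => Set.mem_Ici.mpr (le_max_right x 0)
  have hYc : Continuous Yh := hy.1.comp_continuous hmax hmem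
  have hZc : Continuous Zh := hz.1.comp_continuous hmax hmem
  have hFc : Continuous Fh := hf.1.comp_continuous hmax hmem
  have hGc : Continuous Gh := hg.1.comp_continuous hmax hmem
  set W : ℝ → ℝ := fun t => Yh t - Zh t with hWdef
  set Q : ℝ → ℝ := fun t => b (Yh t) - b (Zh t) with hQdef
  set Hh : ℝ → ℝ := fun t => Fh t - Gh t with hHdef
  have hWc : Continuous W := hYc.sub hZc
  have hQc : Continuous Q := (hbcont.comp hYc).sub (hbcont.comp hZc)
  have hHc : Continuous Hh := hFc.sub hGc
  have hYeq : ∀ t : ℝ, 0 ≤ t → Yh t = y t := fun t ht => by simp [hYdef, max_eq_left ht]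
  have hZeq : ∀ t : ℝ, 0 ≤ t → Zh t = z t := fun t ht => by simp [hZdef, max_eq_left ht]
  have hFeq : ∀ t : ℝ, 0 ≤ t → Fh t = f t := fun t ht => by simp [hFdef, max_eq_left ht]
  have hGeq : ∀ t : ℝ, 0 ≤ t → Gh t = g t := fun t ht => by simp [hGdef, max_eq_left ht]
  have hWeqv : ∀ t : ℝ, 0 ≤ t → W t = y t - z t := fun t ht => by
    rw [hWdef]; simp only; rw [hYeq t ht, hZeq t ht]
  have hHeqv : ∀ t : ℝ, 0 ≤ t → Hh t = f t - g t := fun t ht => by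
    rw [hHdef]; simp only; rw [hFeq t ht, hGeq t ht]
  -- integral equation for W
  have hWeq : ∀ t : ℝ, 0 ≤ t →
      W t = -α * (∫ s in (0:ℝ)..t, W s) + (∫ s in (0:ℝ)..t, Q s) + Hh t := by
    intro t ht
    have cY : (∫ s in (0:ℝ)..t, Yh s) = ∫ s in (0:ℝ)..t, y s :=
      intervalIntegral.integral_congr (fun s hs => by
        rw [Set.uIcc_of_le ht] at hs; exact hYeq s hs.1)
    have cZ : (∫ s in (0:ℝ)..t, Zh s) = ∫ s in (0:ℝ)..t, z s :=
      intervalIntegral.integral_congr (fun s hs => by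
        rw [Set.uIcc_of_le ht] at hs; exact hZeq s hs.1)
    have cbY : (∫ s in (0:ℝ)..t, b (Yh s)) = ∫ s in (0:ℝ)..t, b (y s) :=
      intervalIntegral.integral_congr (fun s hs => by
        rw [Set.uIcc_of_le ht] at hs; rw [hYeq s hs.1])
    have cbZ : (∫ s in (0:ℝ)..t, b (Zh s)) = ∫ s in (0:ℝ)..t, b (z s) :=
      intervalIntegral.integral_congr (fun s hs => by
        rw [Set.uIcc_of_le ht] at hs; rw [hZeq s hs.1])
    have hIW : (∫ s in (0:ℝ)..t, W s)
        = (∫ s in (0:ℝ)..t, y s) - ∫ s in (0:ℝ)..t, z s := by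
      rw [show (∫ s in (0:ℝ)..t, W s)
          = (∫ s in (0:ℝ)..t, Yh s) - ∫ s in (0:ℝ)..t, Zh s from
        intervalIntegral.integral_sub (hYc.intervalIntegrable 0 t) (hZc.intervalIntegrable 0 t),
        cY, cZ]
    have hIQ : (∫ s in (0:ℝ)..t, Q s)
        = (∫ s in (0:ℝ)..t, b (y s)) - ∫ s in (0:ℝ)..t, b (z s) := by
      rw [show (∫ s in (0:ℝ)..t, Q s)
          = (∫ s in (0:ℝ)..t, b (Yh s)) - ∫ s in (0:ℝ)..t, b (Zh s) from
        intervalIntegral.integral_sub ((hbcont.comp hYc).intervalIntegrable 0 t)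
          ((hbcont.comp hZc).intervalIntegrable 0 t),
        cbY, cbZ]
    rw [hWeqv t ht, hHeqv t ht, hIW, hIQ, hyeq t ht, hzeq t ht]
    ring
  -- primitives
  set P : ℝ → ℝ := fun s => ∫ u in (0:ℝ)..s, Q u with hPdef
  have hP : ∀ s : ℝ, HasDerivAt P (Q s) s := fun s =>
    intervalIntegral.integral_hasDerivAt_right (hQc.intervalIntegrable 0 s)
      (hQc.stronglyMeasurableAtFilter _ _) hQc.continuousAt
  have hPc : Continuous P := continuous_iff_continuousAt.mpr fun s => (hP s).continuousAt
  set U : ℝ → ℝ := fun s => ∫ u in (0:ℝ)..s, W u with hUdef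
  have hU : ∀ s : ℝ, HasDerivAt U (W s) s := fun s =>
    intervalIntegral.integral_hasDerivAt_right (hWc.intervalIntegrable 0 s)
      (hWc.stronglyMeasurableAtFilter _ _) hWc.continuousAt
  set V : ℝ → ℝ := fun s => P s + Hh s with hVdef
  have hec : Continuous (fun s : ℝ => Real.exp (α * s)) :=
    Real.continuous_exp.comp (continuous_const.mul continuous_id)
  have hVc : Continuous V := hPc.add hHc
  have hVeq : ∀ s : ℝ, 0 ≤ s → W s = -α * U s + V s := by
    intro s hs
    rw [hWeq s hs]
    simp only [hVdef, hUdef, hPdef]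
    ring
  have hexp : ∀ s : ℝ, HasDerivAt (fun u : ℝ => Real.exp (α * u)) (α * Real.exp (α * s)) s := by
    intro s
    simpa [mul_comm] using ((hasDerivAt_id s).const_mul α).exp
  -- integrability facts
  have hiV : IntervalIntegrable (fun s => Real.exp (α*s) * V s) volume 0 0 → True := fun _ => trivial
  -- key : variation of constants for U
  have hkey : ∀ t : ℝ, 0 ≤ t →
      U t = Real.exp (-(α*t)) * ∫ s in (0:ℝ)..t, Real.exp (α*s) * V s := by
    intro t ht
    have hG : ∀ s ∈ Set.uIcc (0:ℝ) t, HasDerivAt (fun u => Real.exp (α*u) * U u)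
        (Real.exp (α*s) * V s) s := by
      intro s hs
      rw [Set.uIcc_of_le ht] at hs
      have h1 := (hexp s).mul (hU s)
      have h2 : α * Real.exp (α*s) * U s + Real.exp (α*s) * W s = Real.exp (α*s) * V s := by
        rw [hVeq s hs.1]; ring
      rw [h2] at h1
      exact h1
    have hiEV : IntervalIntegrable (fun s => Real.exp (α*s) * V s) volume 0 t :=
      (hec.mul hVc).intervalIntegrable 0 t
    have hint := intervalIntegral.integral_eq_sub_of_hasDerivAt hG hiEV
    have hU0 : U 0 = 0 := intervalIntegral.integral_same
    rw [hint, hU0]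
    simp [← Real.exp_add, ← mul_assoc]
  -- integration by parts
  have hIBP : ∀ t : ℝ, 0 ≤ t →
      α * ∫ s in (0:ℝ)..t, Real.exp (α*s) * P s
        = Real.exp (α*t) * P t - ∫ s in (0:ℝ)..t, Real.exp (α*s) * Q s := by
    intro t ht
    have hibp := intervalIntegral.integral_mul_deriv_eq_deriv_mul
      (u := P) (u' := Q) (v := fun s => Real.exp (α*s)) (v' := fun s => α * Real.exp (α*s))
      (fun s _ => hP s) (fun s _ => hexp s)
      (hQc.intervalIntegrable 0 t)
      ((continuous_const.mul hec).intervalIntegrable 0 t)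
    have hP0 : P 0 = 0 := intervalIntegral.integral_same
    have e1 : α * ∫ s in (0:ℝ)..t, Real.exp (α*s) * P s
        = ∫ s in (0:ℝ)..t, P s * (α * Real.exp (α*s)) := by
      rw [← intervalIntegral.integral_const_mul]
      exact intervalIntegral.integral_congr (fun s _ => by ring)
    have e2 : (∫ s in (0:ℝ)..t, Q s * Real.exp (α*s))
        = ∫ s in (0:ℝ)..t, Real.exp (α*s) * Q s :=
      intervalIntegral.integral_congr (fun s _ => mul_comm _ _)
    rw [e1, hibp, hP0, e2]
    ring
  -- the main identity
  have hident : ∀ t : ℝ, 0 ≤ t →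
      W t = Hh t + Real.exp (-(α*t)) * (∫ s in (0:ℝ)..t, Real.exp (α*s) * Q s)
        - α * Real.exp (-(α*t)) * (∫ s in (0:ℝ)..t, Real.exp (α*s) * Hh s) := by
    intro t ht
    have hiEP : IntervalIntegrable (fun s => Real.exp (α*s) * P s) volume 0 t :=
      (hec.mul hPc).intervalIntegrable 0 t
    have hiEH : IntervalIntegrable (fun s => Real.exp (α*s) * Hh s) volume 0 t :=
      (hec.mul hHc).intervalIntegrable 0 t
    have hsplit : (∫ s in (0:ℝ)..t, Real.exp (α*s) * V s)
        = (∫ s in (0:ℝ)..t, Real.exp (α*s) * P s)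
          + ∫ s in (0:ℝ)..t, Real.exp (α*s) * Hh s := by
      rw [← intervalIntegral.integral_add hiEP hiEH]
      exact intervalIntegral.integral_congr (fun s _ => by rw [hVdef]; ring)
    have h1 := hVeq t ht
    have h2 := hkey t ht
    have h3 := hIBP t ht
    have hee : Real.exp (-(α*t)) * Real.exp (α*t) = 1 := by
      rw [← Real.exp_add]; simp
    have hVt : V t = P t + Hh t := by rw [hVdef]
    rw [h1, h2, hsplit, hVt]
    linear_combination (-Real.exp (-(α*t))) * h3 - P t * hee
  -- norms
  set M := C0norm (fun t => y t - z t) with hMdef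
  set N := C0norm (fun t => f t - g t) with hNdef
  have hWC0 : ContinuousOn (fun t => y t - z t) (Set.Ici 0) := hy.1.sub hz.1
  have hHC0 : ContinuousOn (fun t => f t - g t) (Set.Ici 0) := hf.1.sub hg.1
  have limaux : ∀ (p q : ℝ → ℝ), Tendsto (fun t => |p t| / t) atTop (nhds 0) →
      Tendsto (fun t => |q t| / t) atTop (nhds 0) →
      Tendsto (fun t => |p t - q t| / t) atTop (nhds 0) := by
    intro p q hp hq
    have hsum : Tendsto (fun t => |p t| / t + |q t| / t) atTop (nhds 0) := by
      simpa using hp.add hq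
    apply squeeze_zero' (g := fun t => |p t| / t + |q t| / t)
    · filter_upwards [eventually_gt_atTop (0:ℝ)] with t ht
      positivity
    · filter_upwards [eventually_gt_atTop (0:ℝ)] with t ht
      rw [← add_div]
      gcongr
      exact abs_sub _ _
    · exact hsum
  have hWlim := limaux y z hy.2.2 hz.2.2
  have hHlim := limaux f g hf.2.2 hg.2.2
  have hMbdd := C0_bddAbove (fun t => y t - z t) hWC0 hWlim
  have hNbdd := C0_bddAbove (fun t => f t - g t) hHC0 hHlim
  have hM0 : 0 ≤ M := C0norm_nonneg_of _ hMbdd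
  have hN0 : 0 ≤ N := C0norm_nonneg_of _ hNbdd
  have hW00 : (fun t => y t - z t) 0 = 0 := by simp only; rw [hy.2.1, hz.2.1]; ring
  have hH00 : (fun t => f t - g t) 0 = 0 := by simp only; rw [hf.2.1, hg.2.1]; ring
  have hWle : ∀ s : ℝ, 0 ≤ s → |W s| ≤ M * (1 + s) := by
    intro s hs
    rw [hWeqv s hs]
    exact abs_le_C0norm (fun t => y t - z t) hW00 hMbdd s hs
  have hHle : ∀ s : ℝ, 0 ≤ s → |Hh s| ≤ N * (1 + s) := by
    intro s hs
    rw [hHeqv s hs]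
    exact abs_le_C0norm (fun t => f t - g t) hH00 hNbdd s hs
  -- exponential integral bound
  have hexpint : ∀ t : ℝ, 0 ≤ t →
      Real.exp (-(α*t)) * (∫ s in (0:ℝ)..t, Real.exp (α*s)) ≤ 1/α := by
    intro t ht
    have hJ : (∫ s in (0:ℝ)..t, Real.exp (α*s)) = (Real.exp (α*t) - 1) / α := by
      have hd : ∀ s ∈ Set.uIcc (0:ℝ) t,
          HasDerivAt (fun u => Real.exp (α*u) / α) (Real.exp (α*s)) s := by
        intro s _
        have := (hexp s).div_const α
        simpa [mul_div_assoc, mul_div_cancel_left₀ _ hα.ne'] using this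
      have := intervalIntegral.integral_eq_sub_of_hasDerivAt hd
        (hec.intervalIntegrable 0 t)
      rw [this, mul_zero, Real.exp_zero]
      ring
    have hprod : Real.exp (-(α*t)) * (Real.exp (α*t) - 1) = 1 - Real.exp (-(α*t)) := by
      rw [mul_sub, ← Real.exp_add, mul_one, neg_add_cancel, Real.exp_zero]
    have h1 : Real.exp (-(α*t)) * ((Real.exp (α*t) - 1)/α) = (1 - Real.exp (-(α*t)))/α := by
      rw [← mul_div_assoc, hprod]
    rw [hJ, h1]
    gcongr
    nlinarith [Real.exp_pos (-(α*t))]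
  have hJpos : ∀ t : ℝ, 0 ≤ t → 0 ≤ ∫ s in (0:ℝ)..t, Real.exp (α*s) := by
    intro t ht
    apply intervalIntegral.integral_nonneg ht
    intro s _
    exact (Real.exp_pos _).le
  -- main pointwise estimate
  have hmain : ∀ t : ℝ, 0 < t → |y t - z t| / (1 + t) ≤ 2*N + K/α * M := by
    intro t ht0
    have ht : (0:ℝ) ≤ t := ht0.le
    set E := Real.exp (-(α*t)) with hEdef
    have hE0 : 0 < E := Real.exp_pos _
    set J := ∫ s in (0:ℝ)..t, Real.exp (α*s) with hJdef
    have hJ0 : 0 ≤ J := hJpos t ht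
    have hEJ : E * J ≤ 1/α := hexpint t ht
    have hEJ0 : 0 ≤ E * J := mul_nonneg hE0.le hJ0
    -- bounds on the two integrals
    have hQb : ∀ s ∈ Set.Icc (0:ℝ) t, |Q s| ≤ K * (M * (1+t)) := by
      intro s hs
      have h1 : |Q s| ≤ K * |W s| := by
        rw [hQdef, hWdef]
        exact hb _ _
      have h2 : |W s| ≤ M * (1 + s) := hWle s hs.1
      have h3 : M * (1 + s) ≤ M * (1 + t) := by nlinarith [hs.2]
      calc |Q s| ≤ K * |W s| := h1
        _ ≤ K * (M * (1 + s)) := by nlinarith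
        _ ≤ K * (M * (1 + t)) := by nlinarith
    have hHb : ∀ s ∈ Set.Icc (0:ℝ) t, |Hh s| ≤ N * (1+t) := by
      intro s hs
      have h2 : |Hh s| ≤ N * (1 + s) := hHle s hs.1
      nlinarith [hs.2]
    have hI1 : |∫ s in (0:ℝ)..t, Real.exp (α*s) * Q s| ≤ K * (M * (1+t)) * J := by
      rw [hJdef]
      exact exp_weighted_integral_bound α (K * (M * (1+t))) t ht Q hQc hQb
    have hI2 : |∫ s in (0:ℝ)..t, Real.exp (α*s) * Hh s| ≤ N * (1+t) * J := by
      rw [hJdef]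
      exact exp_weighted_integral_bound α (N * (1+t)) t ht Hh hHc hHb
    -- combine
    have htri : ∀ a c d : ℝ, |a + c - d| ≤ |a| + |c| + |d| := by
      intro a c d
      calc |a + c - d| ≤ |a + c| + |d| := abs_sub _ _
        _ ≤ |a| + |c| + |d| := by gcongr; exact abs_add_le _ _
    have hWt : |y t - z t| ≤ N * (1+t) + E * (K * (M * (1+t)) * J) + α * E * (N * (1+t) * J) := by
      rw [← hWeqv t ht, hident t ht]
      calc |Hh t + E * (∫ s in (0:ℝ)..t, Real.exp (α*s) * Q s)
              - α * E * (∫ s in (0:ℝ)..t, Real.exp (α*s) * Hh s)|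
          ≤ |Hh t| + |E * (∫ s in (0:ℝ)..t, Real.exp (α*s) * Q s)|
              + |α * E * (∫ s in (0:ℝ)..t, Real.exp (α*s) * Hh s)| := htri _ _ _
        _ ≤ N * (1+t) + E * (K * (M * (1+t)) * J) + α * E * (N * (1+t) * J) := by
            have b1 : |Hh t| ≤ N * (1+t) := hHle t ht
            have b2 : |E * (∫ s in (0:ℝ)..t, Real.exp (α*s) * Q s)|
                ≤ E * (K * (M * (1+t)) * J) := by
              rw [abs_mul, abs_of_pos hE0]
              exact mul_le_mul_of_nonneg_left hI1 hE0.le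
            have b3 : |α * E * (∫ s in (0:ℝ)..t, Real.exp (α*s) * Hh s)|
                ≤ α * E * (N * (1+t) * J) := by
              rw [abs_mul, abs_mul, abs_of_pos hα, abs_of_pos hE0]
              exact mul_le_mul_of_nonneg_left hI2 (by positivity)
            linarith
    have hterm2 : E * (K * (M * (1+t)) * J) ≤ K * (M * (1+t)) / α := by
      have : E * (K * (M * (1+t)) * J) = K * (M * (1+t)) * (E * J) := by ring
      rw [this]
      calc K * (M * (1+t)) * (E * J) ≤ K * (M * (1+t)) * (1/α) := by
            apply mul_le_mul_of_nonneg_left hEJ (by positivity)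
        _ = K * (M * (1+t)) / α := by ring
    have hterm3 : α * E * (N * (1+t) * J) ≤ N * (1+t) := by
      have : α * E * (N * (1+t) * J) = α * (N * (1+t)) * (E * J) := by ring
      rw [this]
      calc α * (N * (1+t)) * (E * J) ≤ α * (N * (1+t)) * (1/α) := by
            apply mul_le_mul_of_nonneg_left hEJ (by positivity)
        _ = N * (1+t) := by field_simp
    have hfinal : |y t - z t| ≤ (2*N + K/α * M) * (1 + t) := by
      have expand : (2*N + K/α * M) * (1 + t)
          = N * (1+t) + K * (M * (1+t)) / α + N * (1+t) := by
        field_simp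
        ring
      rw [expand]
      linarith
    rw [div_le_iff₀ (by linarith : (0:ℝ) < 1 + t)]
    exact hfinal
  -- conclude
  haveI : Nonempty (Set.Ioi (0:ℝ)) := ⟨⟨1, by norm_num⟩⟩
  have hMle : M ≤ 2*N + K/α * M := by
    rw [hMdef, C0norm]
    apply ciSup_le
    rintro ⟨t, ht⟩
    exact hmain t ht
  rw [div_mul_eq_mul_div, le_div_iff₀ (by linarith : (0:ℝ) < α - K)]
  have h2 : M * α ≤ (2*N + K/α * M) * α := mul_le_mul_of_nonneg_right hMle hα.le
  have h3 : (2*N + K/α * M) * α = 2*N*α + K*M := by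
    field_simp
  rw [h3] at h2
  nlinarith
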